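/- Only vectors of the forms d_k = (e_k, 0), k = 1,…,m, and g_i = (0, −e_i), i = 1,…,r, up to positive scalar multiples, can be direction vectors of infinite edges of the BCC production possibility set T: if F ⊆ T is a face of T (i.e., F is an extreme subset of T) of the form F = {p + t·v : t ≥ 0} for some p ∈ T and some nonzero v ∈ ℝ^m × ℝ^r, then there exists c > 0 such that v = c·d_k for some k ∈ {1,…,m} or v = c·g_i for some i ∈ {1,…,r}. -/

import Mathlib

open Finset

def BCC {ι : Type*} [Fintype ι] {m r : ℕ} (X : ι → Fin m → ℝ) (Y : ι → Fin r → ℝ) :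
    Set ((Fin m → ℝ) × (Fin r → ℝ)) :=
  {p | ∃ l : ι → ℝ, (∀ j, 0 ≤ l j) ∧ (∑ j, l j = 1) ∧
    (∀ k, ∑ j, l j * X j k ≤ p.1 k) ∧ (∀ i, p.2 i ≤ ∑ j, l j * Y j i)}

lemma bcc_recession {ι : Type*} [Fintype ι] {m r : ℕ} {X : ι → Fin m → ℝ} {Y : ι → Fin r → ℝ}
    {q u : (Fin m → ℝ) × (Fin r → ℝ)} (hq : q ∈ BCC X Y)
    (hu1 : ∀ k, 0 ≤ u.1 k) (hu2 : ∀ i, u.2 i ≤ 0) : q + u ∈ BCC X Y := by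
  obtain ⟨l, hl0, hl1, hlX, hlY⟩ := hq
  refine ⟨l, hl0, hl1, fun k => ?_, fun i => ?_⟩
  · have h1 := hlX k; have h2 := hu1 k
    simp only [Prod.fst_add, Pi.add_apply]; linarith
  · have h1 := hlY i; have h2 := hu2 i
    simp only [Prod.snd_add, Pi.add_apply]; linarith

lemma nonneg_slope {c d : ℝ} (h : ∀ t : ℝ, 0 ≤ t → 0 ≤ c + t * d) : 0 ≤ d := by
  by_contra hd
  push_neg at hd
  have h0 := h 0 le_rfl
  simp at h0
  have ht := h ((c + 1) / (-d)) (by apply div_nonneg <;> linarith)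
  have hne : -d ≠ 0 := by linarith
  have : c + (c + 1) / (-d) * d = -1 := by
    have hd0 : d ≠ 0 := ne_of_lt hd
    field_simp; ring
  linarith

lemma nonpos_slope {c d M : ℝ} (h : ∀ t : ℝ, 0 ≤ t → c + t * d ≤ M) : d ≤ 0 := by
  have := nonneg_slope (c := M - c) (d := -d) (fun t ht => by have := h t ht; nlinarith)
  linarith

lemma bcc_ray_split {n m r : ℕ} {X : Fin n → Fin m → ℝ} {Y : Fin n → Fin r → ℝ}
    {F : Set ((Fin m → ℝ) × (Fin r → ℝ))} {p v a b : (Fin m → ℝ) × (Fin r → ℝ)}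
    (hp : p ∈ BCC X Y)
    (hface : IsExtreme ℝ (BCC X Y) F)
    (hF : F = {q | ∃ t : ℝ, 0 ≤ t ∧ q = p + t • v})
    (hab : v = a + b)
    (ha1 : ∀ k, 0 ≤ a.1 k) (ha2 : ∀ i, a.2 i ≤ 0)
    (hb1 : ∀ k, 0 ≤ b.1 k) (hb2 : ∀ i, b.2 i ≤ 0) :
    ∃ s : ℝ, 0 ≤ s ∧ (2:ℝ) • b = s • v := by
  have hq1 : p + (2:ℝ) • a ∈ BCC X Y := by
    refine bcc_recession hp (fun k => ?_) (fun i => ?_)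
    · have := ha1 k; simp only [Prod.smul_fst, Pi.smul_apply, smul_eq_mul]; linarith
    · have := ha2 i; simp only [Prod.smul_snd, Pi.smul_apply, smul_eq_mul]; linarith
  have hq2 : p + (2:ℝ) • b ∈ BCC X Y := by
    refine bcc_recession hp (fun k => ?_) (fun i => ?_)
    · have := hb1 k; simp only [Prod.smul_fst, Pi.smul_apply, smul_eq_mul]; linarith
    · have := hb2 i; simp only [Prod.smul_snd, Pi.smul_apply, smul_eq_mul]; linarith
  have hz : p + (1:ℝ) • v ∈ F := by rw [hF]; exact ⟨1, zero_le_one, rfl⟩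
  have hseg : p + (1:ℝ) • v ∈ openSegment ℝ (p + (2:ℝ) • a) (p + (2:ℝ) • b) := by
    refine ⟨1/2, 1/2, by norm_num, by norm_num, by norm_num, ?_⟩
    rw [hab]; module
  have h2 := hface.right_mem_of_mem_openSegment hq1 hq2 hz hseg
  rw [hF] at h2
  obtain ⟨s, hs, heq⟩ := h2
  exact ⟨s, hs, add_left_cancel heq⟩

theorem bcc_infinite_edge_direction (m r n : ℕ) (hn : 1 ≤ n)
    (X : Fin n → Fin m → ℝ) (Y : Fin n → Fin r → ℝ)
    (hX : ∀ j k, 0 ≤ X j k) (hY : ∀ j i, 0 ≤ Y j i)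
    (F : Set ((Fin m → ℝ) × (Fin r → ℝ))) (p v : (Fin m → ℝ) × (Fin r → ℝ))
    (hp : p ∈ BCC X Y) (hv : v ≠ 0)
    (hface : IsExtreme ℝ (BCC X Y) F)
    (hF : F = {q | ∃ t : ℝ, 0 ≤ t ∧ q = p + t • v}) :
    ∃ c : ℝ, 0 < c ∧
      ((∃ k : Fin m, v = c • ((Pi.single k (1 : ℝ), 0) : (Fin m → ℝ) × (Fin r → ℝ))) ∨
       (∃ i : Fin r, v = c • ((0, -Pi.single i (1 : ℝ)) : (Fin m → ℝ) × (Fin r → ℝ)))) := by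
  classical
  have hmem : ∀ t : ℝ, 0 ≤ t → p + t • v ∈ BCC X Y := fun t ht =>
    hface.1 (by rw [hF]; exact ⟨t, ht, rfl⟩)
  -- v.1 ≥ 0
  have hv1 : ∀ k, 0 ≤ v.1 k := by
    intro k
    refine nonneg_slope (c := p.1 k) (fun t ht => ?_)
    obtain ⟨l, hl0, hl1, hlX, hlY⟩ := hmem t ht
    have h1 := hlX k
    simp only [Prod.fst_add, Pi.add_apply, Prod.smul_fst, Pi.smul_apply, smul_eq_mul] at h1
    have h2 : (0:ℝ) ≤ ∑ j, l j * X j k :=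
      Finset.sum_nonneg fun j _ => mul_nonneg (hl0 j) (hX j k)
    linarith
  -- v.2 ≤ 0
  have hv2 : ∀ i, v.2 i ≤ 0 := by
    intro i
    refine nonpos_slope (c := p.2 i) (M := ∑ j, Y j i) (fun t ht => ?_)
    obtain ⟨l, hl0, hl1, hlX, hlY⟩ := hmem t ht
    have h1 := hlY i
    simp only [Prod.snd_add, Pi.add_apply, Prod.smul_snd, Pi.smul_apply, smul_eq_mul] at h1
    have h2 : ∑ j, l j * Y j i ≤ ∑ j, Y j i := by
      refine Finset.sum_le_sum fun j _ => ?_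
      have hlj : l j ≤ 1 := hl1 ▸ Finset.single_le_sum (fun j' _ => hl0 j') (Finset.mem_univ j)
      exact mul_le_of_le_one_left (hY j i) hlj
    linarith
  by_cases h : ∃ k, v.1 k ≠ 0
  · obtain ⟨k, hk⟩ := h
    have hpos : 0 < v.1 k := lt_of_le_of_ne (hv1 k) (Ne.symm hk)
    set a : (Fin m → ℝ) × (Fin r → ℝ) := (Pi.single k (v.1 k), 0) with ha
    set b : (Fin m → ℝ) × (Fin r → ℝ) := (v.1 - Pi.single k (v.1 k), v.2) with hb
    have hab : v = a + b := by
      refine Prod.ext ?_ ?_ <;> simp [ha, hb]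
    obtain ⟨s, hs, hsb⟩ := bcc_ray_split hp hface hF hab
      (fun k' => by
        rcases eq_or_ne k' k with h' | h'
        · subst h'; simpa [ha] using hpos.le
        · simp [ha, Pi.single_eq_of_ne h'])
      (fun i => le_rfl)
      (fun k' => by
        rcases eq_or_ne k' k with h' | h'
        · subst h'; simp [hb]
        · simp [hb, Pi.single_eq_of_ne h', hv1 k'])
      (fun i => hv2 i)
    have hcoord := congrFun (congrArg Prod.fst hsb) k
    simp only [hb, Prod.smul_fst, Pi.smul_apply, smul_eq_mul, Pi.sub_apply,
      Pi.single_eq_same] at hcoord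
    have hs0 : s = 0 := by
      have : s * v.1 k = 0 := by linarith
      exact (mul_eq_zero.mp this).resolve_right hk
    have hb0 : b = 0 := by
      rw [hs0, zero_smul] at hsb
      have := smul_eq_zero.mp hsb
      simpa using this
    refine ⟨v.1 k, hpos, Or.inl ⟨k, ?_⟩⟩
    have hva : v = a := by rw [hab, hb0, add_zero]
    rw [hva]
    refine Prod.ext ?_ ?_
    · funext k'
      rcases eq_or_ne k' k with h' | h'
      · subst h'; simp [ha]
      · simp [ha, Pi.single_eq_of_ne h']
    · simp [ha]
  · push_neg at h
    have hex : ∃ i, v.2 i ≠ 0 := by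
      by_contra hc
      push_neg at hc
      apply hv
      refine Prod.ext ?_ ?_ <;> funext x
      · simpa using h x
      · simpa using hc x
    obtain ⟨i, hi⟩ := hex
    have hneg : v.2 i < 0 := lt_of_le_of_ne (hv2 i) hi
    set a : (Fin m → ℝ) × (Fin r → ℝ) := (0, Pi.single i (v.2 i)) with ha
    set b : (Fin m → ℝ) × (Fin r → ℝ) := (v.1, v.2 - Pi.single i (v.2 i)) with hb
    have hab : v = a + b := by
      refine Prod.ext ?_ ?_ <;> simp [ha, hb]
    obtain ⟨s, hs, hsb⟩ := bcc_ray_split hp hface hF hab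
      (fun k => le_rfl)
      (fun i' => by
        rcases eq_or_ne i' i with h' | h'
        · subst h'; simpa [ha] using hneg.le
        · simp [ha, Pi.single_eq_of_ne h'])
      (fun k => by simpa [hb] using hv1 k)
      (fun i' => by
        rcases eq_or_ne i' i with h' | h'
        · subst h'; simp [hb]
        · simp [hb, Pi.single_eq_of_ne h', hv2 i'])
    have hcoord := congrFun (congrArg Prod.snd hsb) i
    simp only [hb, Prod.smul_snd, Pi.smul_apply, smul_eq_mul, Pi.sub_apply,
      Pi.single_eq_same] at hcoord
    have hs0 : s = 0 := by
      have : s * v.2 i = 0 := by linarith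
      exact (mul_eq_zero.mp this).resolve_right hi
    have hb0 : b = 0 := by
      rw [hs0, zero_smul] at hsb
      have := smul_eq_zero.mp hsb
      simpa using this
    refine ⟨-(v.2 i), by linarith, Or.inr ⟨i, ?_⟩⟩
    have hva : v = a := by rw [hab, hb0, add_zero]
    rw [hva]
    refine Prod.ext ?_ ?_
    · simp [ha]
    · funext i'
      rcases eq_or_ne i' i with h' | h'
      · subst h'; simp [ha]
      · simp [ha, Pi.single_eq_of_ne h']
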